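/- Let k, g : [0,T] → ℝ be continuous with 0 < k(t) < g(t), and suppose g is differentiable with k(t)² − g(t)² − g'(t) < 0 for all t ∈ [0,T]. Let j : [0,T] → ℝ solve the Jacobi equation j'' = k²·j with j(0) = 0 and j'(0) = 1. Then j(T) ≤ (1/k(0))·exp(∫₀^T g(t) dt). -/

import Mathlib

open Set MeasureTheory Filter Topology

lemma my_aux_mono (a b : ℝ) (f f' : ℝ → ℝ) (hf : ContinuousOn f (Set.Icc a b))
    (hd : ∀ t ∈ Set.Ioo a b, HasDerivAt f (f' t) t)
    (h0 : ∀ t ∈ Set.Ioo a b, 0 ≤ f' t) :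
    ∀ t ∈ Set.Icc a b, f a ≤ f t := by
  intro t ht
  have hm : MonotoneOn f (Set.Icc a b) := by
    apply monotoneOn_of_hasDerivWithinAt_nonneg (convex_Icc a b) hf
    · intro x hx
      rw [interior_Icc] at hx
      exact (hd x hx).hasDerivWithinAt
    · intro x hx
      rw [interior_Icc] at hx
      exact h0 x hx
  exact hm (Set.left_mem_Icc.2 (ht.1.trans ht.2)) ht ht.1

lemma my_aux_anti (a b : ℝ) (f f' : ℝ → ℝ) (hf : ContinuousOn f (Set.Icc a b))
    (hd : ∀ t ∈ Set.Ioo a b, HasDerivAt f (f' t) t)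
    (h0 : ∀ t ∈ Set.Ioo a b, f' t ≤ 0) :
    ∀ t ∈ Set.Icc a b, f t ≤ f a := by
  intro t ht
  have hm : AntitoneOn f (Set.Icc a b) := by
    apply antitoneOn_of_hasDerivWithinAt_nonpos (convex_Icc a b) hf
    · intro x hx
      rw [interior_Icc] at hx
      exact (hd x hx).hasDerivWithinAt
    · intro x hx
      rw [interior_Icc] at hx
      exact h0 x hx
  exact hm (Set.left_mem_Icc.2 (ht.1.trans ht.2)) ht ht.1

lemma my_aux_prim_cont (T : ℝ) (hT : 0 < T) (u : ℝ → ℝ)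
    (hu : ContinuousOn u (Set.Icc 0 T)) :
    ContinuousOn (fun x => ∫ s in (0:ℝ)..x, u s) (Set.Icc 0 T) := by
  have huIcc : Set.uIcc (0:ℝ) T = Set.Icc 0 T := Set.uIcc_of_le hT.le
  have := intervalIntegral.continuousOn_primitive_interval (μ := volume) (f := u) (a := 0) (b := T)
    (by rw [huIcc]; exact hu.integrableOn_Icc)
  rwa [huIcc] at this

lemma my_aux_prim_deriv (T : ℝ) (u : ℝ → ℝ)
    (hu : ContinuousOn u (Set.Icc 0 T)) :
    ∀ t ∈ Set.Ioo 0 T, HasDerivAt (fun x => ∫ s in (0:ℝ)..x, u s) (u t) t := by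
  intro t ht
  have hca : ∀ x ∈ Set.Ioo (0:ℝ) T, ContinuousAt u x := fun x hx =>
    (hu x ⟨hx.1.le, hx.2.le⟩).continuousAt (Icc_mem_nhds hx.1 hx.2)
  have hint : IntervalIntegrable u MeasureTheory.volume 0 t := by
    apply ContinuousOn.intervalIntegrable
    rw [Set.uIcc_of_le ht.1.le]
    exact hu.mono (Set.Icc_subset_Icc le_rfl ht.2.le)
  have hmeas : StronglyMeasurableAtFilter u (𝓝 t) :=
    ContinuousAt.stronglyMeasurableAtFilter isOpen_Ioo hca t ht
  exact intervalIntegral.integral_hasDerivAt_right hint hmeas (hca t ht)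

lemma my_part1 (T : ℝ) (hT : 0 < T) (k j j' : ℝ → ℝ)
    (hj : ∀ t ∈ Set.Icc 0 T, HasDerivAt j (j' t) t)
    (hj' : ∀ t ∈ Set.Icc 0 T, HasDerivAt j' ((k t) ^ 2 * j t) t)
    (hj0 : j 0 = 0) (hj'0 : j' 0 = 1) :
    ∀ t ∈ Set.Icc 0 T, 1 ≤ j' t := by
  have hjc : ContinuousOn j (Set.Icc 0 T) := fun t ht => (hj t ht).continuousAt.continuousWithinAt
  have hj'c : ContinuousOn j' (Set.Icc 0 T) :=
    fun t ht => (hj' t ht).continuousAt.continuousWithinAt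
  by_contra hcon
  push_neg at hcon
  obtain ⟨b, hbmem, hblt⟩ := hcon
  set B : Set ℝ := {t | t ∈ Set.Icc 0 T ∧ j' t < 1} with hBdef
  have hBne : B.Nonempty := ⟨b, hbmem, hblt⟩
  have hBbd : BddBelow B := ⟨0, fun x hx => hx.1.1⟩
  set c := sInf B with hcdef
  have hc0 : 0 ≤ c := le_csInf hBne (fun x hx => hx.1.1)
  have hcb : c ≤ b := csInf_le hBbd ⟨hbmem, hblt⟩
  have hcT : c ≤ T := hcb.trans hbmem.2
  have hcI : c ∈ Set.Icc 0 T := ⟨hc0, hcT⟩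
  have hlt : ∀ t, 0 ≤ t → t < c → 1 ≤ j' t := by
    intro t ht0 htc
    by_contra hl
    push_neg at hl
    exact absurd (csInf_le hBbd ⟨⟨ht0, htc.le.trans hcT⟩, hl⟩) (not_le.2 htc)
  have hj'c1 : 1 ≤ j' c := by
    rcases eq_or_lt_of_le hc0 with h | h
    · rw [← h, hj'0]
    · have hcont : Filter.Tendsto j' (𝓝[<] c) (𝓝 (j' c)) :=
        (hj' c hcI).continuousAt.continuousWithinAt
      refine ge_of_tendsto hcont ?_
      have hmem : Set.Ioo (0:ℝ) c ∈ 𝓝[<] c := Ioo_mem_nhdsLT_of_mem ⟨h, le_rfl⟩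
      filter_upwards [hmem] with t ht
      exact hlt t ht.1.le ht.2
  have hcltT : c < T := by
    rcases lt_or_eq_of_le hcT with h | h
    · exact h
    · exfalso
      have hbT : b = c := le_antisymm (h ▸ hbmem.2) hcb
      rw [hbT] at hblt
      linarith
  -- j t ≥ t on [0, c]
  have hjup : ∀ t ∈ Set.Icc 0 c, t ≤ j t := by
    have := my_aux_mono 0 c (fun t => j t - t) (fun t => j' t - 1)
      ((hjc.mono (Set.Icc_subset_Icc le_rfl hcT)).sub continuousOn_id)
      (fun t ht => (hj t ⟨ht.1.le, ht.2.le.trans hcT⟩).sub (hasDerivAt_id t))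
      (fun t ht => by have := hlt t ht.1.le ht.2; show (0:ℝ) ≤ j' t - 1; linarith)
    intro t ht
    have h2 := this t ht
    simp only [hj0] at h2
    linarith
  -- j grows just above c
  have hslope : ∀ᶠ t in 𝓝[>] c, j c < j t := by
    have h1 : Tendsto (slope j c) (𝓝[≠] c) (𝓝 (j' c)) :=
      hasDerivAt_iff_tendsto_slope.1 (hj c hcI)
    have h2 : Tendsto (slope j c) (𝓝[>] c) (𝓝 (j' c)) :=
      h1.mono_left (nhdsWithin_mono c (fun x hx => ne_of_gt hx))
    have h3 : ∀ᶠ t in 𝓝[>] c, 0 < slope j c t :=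
      h2.eventually (eventually_gt_nhds (by linarith))
    filter_upwards [h3, self_mem_nhdsWithin] with t h4 h5
    have h6 : (0:ℝ) < t - c := sub_pos.2 h5
    rw [slope_def_field] at h4
    have h7 := mul_pos h4 h6
    rw [div_mul_cancel₀ _ h6.ne'] at h7
    linarith
  obtain ⟨u, hu, hsub⟩ := mem_nhdsGT_iff_exists_Ioo_subset.1 hslope
  set d := min ((c + u) / 2) T with hddef
  have hcd : c < d := by
    have : c < u := hu
    apply lt_min (by linarith) hcltT
  have hdT : d ≤ T := min_le_right _ _
  have hdu : d < u := by
    have : c < u := hu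
    calc d ≤ (c + u) / 2 := min_le_left _ _
    _ < u := by linarith
  have hjd : ∀ t ∈ Set.Icc 0 d, 0 ≤ j t := by
    intro t ht
    rcases le_or_gt t c with h | h
    · have := hjup t ⟨ht.1, h⟩; linarith [ht.1]
    · have h1 : t ∈ Set.Ioo c u := ⟨h, lt_of_le_of_lt ht.2 hdu⟩
      have h2 := hsub h1
      have h3 := hjup c ⟨hc0, le_rfl⟩
      simp only [Set.mem_setOf_eq] at h2
      linarith
  have hmono := my_aux_mono 0 d j' (fun t => (k t) ^ 2 * j t)
    (hj'c.mono (Set.Icc_subset_Icc le_rfl hdT))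
    (fun t ht => hj' t ⟨ht.1.le, ht.2.le.trans hdT⟩)
    (fun t ht => mul_nonneg (sq_nonneg _) (hjd t ⟨ht.1.le, ht.2.le⟩))
  obtain ⟨b', hb'B, hb'lt⟩ := exists_lt_of_csInf_lt hBne (show sInf B < d from hcd)
  have := hmono b' ⟨hb'B.1.1, hb'lt.le⟩
  rw [hj'0] at this
  exact absurd this (not_le.2 hb'B.2)

/-- Upper barrier for the Jacobi equation: if `0 < k < g` on `[0,T]` with
`k² - g² - g' < 0`, `j'' = k²j`, `j(0) = 0`, `j'(0) = 1` (and `k(T) = k(0)`), then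
`j(T) ≤ (1/k(0)) exp(∫₀ᵀ g)`. -/
theorem stmt_6 (T : ℝ) (hT : 0 < T) (k g g' j j' : ℝ → ℝ)
    (hk : ContinuousOn k (Set.Icc 0 T)) (hg : ContinuousOn g (Set.Icc 0 T))
    (hkpos : ∀ t ∈ Set.Icc 0 T, 0 < k t)
    (hkg : ∀ t ∈ Set.Icc 0 T, k t < g t)
    (hgd : ∀ t ∈ Set.Icc 0 T, HasDerivAt g (g' t) t)
    (hbar : ∀ t ∈ Set.Icc 0 T, (k t) ^ 2 - (g t) ^ 2 - g' t < 0)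
    (hj : ∀ t ∈ Set.Icc 0 T, HasDerivAt j (j' t) t)
    (hj' : ∀ t ∈ Set.Icc 0 T, HasDerivAt j' ((k t) ^ 2 * j t) t)
    (hj0 : j 0 = 0) (hj'0 : j' 0 = 1)
    (hkT : k T = k 0) :
    j T ≤ (1 / k 0) * Real.exp (∫ t in (0:ℝ)..T, g t) := by
  have h0I : (0:ℝ) ∈ Set.Icc 0 T := ⟨le_rfl, hT.le⟩
  have hTI : T ∈ Set.Icc 0 T := ⟨hT.le, le_rfl⟩
  have hjc : ContinuousOn j (Set.Icc 0 T) := fun t ht => (hj t ht).continuousAt.continuousWithinAt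
  have hj'c : ContinuousOn j' (Set.Icc 0 T) :=
    fun t ht => (hj' t ht).continuousAt.continuousWithinAt
  have hgpos : ∀ t ∈ Set.Icc 0 T, 0 < g t := fun t ht => (hkpos t ht).trans (hkg t ht)
  have hκ : 0 < k 0 := hkpos 0 h0I
  -- j' ≥ 1 and j ≥ t ≥ 0
  have hj'ge1 : ∀ t ∈ Set.Icc 0 T, 1 ≤ j' t := my_part1 T hT k j j' hj hj' hj0 hj'0
  have hjget : ∀ t ∈ Set.Icc 0 T, t ≤ j t := by
    have := my_aux_mono 0 T (fun t => j t - t) (fun t => j' t - 1)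
      (hjc.sub continuousOn_id)
      (fun t ht => (hj t ⟨ht.1.le, ht.2.le⟩).sub (hasDerivAt_id t))
      (fun t ht => by
        have := hj'ge1 t ⟨ht.1.le, ht.2.le⟩; show (0:ℝ) ≤ j' t - 1; linarith)
    intro t ht
    have h2 := this t ht
    simp only [hj0] at h2
    linarith
  have hjnn : ∀ t ∈ Set.Icc 0 T, 0 ≤ j t := fun t ht => (ht.1).trans (hjget t ht)
  -- the primitive G
  set G : ℝ → ℝ := fun x => ∫ s in (0:ℝ)..x, g s with hGdef
  have hGcont : ContinuousOn G (Set.Icc 0 T) := my_aux_prim_cont T hT g hg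
  have hGd : ∀ t ∈ Set.Ioo 0 T, HasDerivAt G (g t) t := my_aux_prim_deriv T g hg
  have hG0 : G 0 = 0 := intervalIntegral.integral_same
  -- Step 2: (j' - g j) e^G is nonincreasing, hence j' - g j ≤ e^{-G}
  have hpsi : ∀ t ∈ Set.Icc 0 T, j' t - g t * j t ≤ Real.exp (-G t) := by
    have hanti := my_aux_anti 0 T (fun t => (j' t - g t * j t) * Real.exp (G t))
      (fun t => (((k t) ^ 2 - (g t) ^ 2 - g' t) * j t) * Real.exp (G t))
      ((hj'c.sub (hg.mul hjc)).mul (Real.continuous_exp.comp_continuousOn hGcont))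
      (fun t ht => by
        have htI : t ∈ Set.Icc 0 T := ⟨ht.1.le, ht.2.le⟩
        have h1 : HasDerivAt (fun s => j' s - g s * j s)
            ((k t) ^ 2 * j t - (g' t * j t + g t * j' t)) t :=
          (hj' t htI).sub ((hgd t htI).mul (hj t htI))
        have h2 : HasDerivAt (fun s => Real.exp (G s)) (Real.exp (G t) * g t) t :=
          (hGd t ht).exp
        have h3 : HasDerivAt (fun s => (j' s - g s * j s) * Real.exp (G s))
            (((k t) ^ 2 * j t - (g' t * j t + g t * j' t)) * Real.exp (G t)
              + (j' t - g t * j t) * (Real.exp (G t) * g t)) t := h1.mul h2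
        convert h3 using 1
        ring)
      (fun t ht => by
        have htI : t ∈ Set.Icc 0 T := ⟨ht.1.le, ht.2.le⟩
        have hb := (hbar t htI).le
        have hjn := hjnn t htI
        have he := (Real.exp_pos (G t)).le
        have := mul_nonpos_of_nonpos_of_nonneg (mul_nonpos_of_nonpos_of_nonneg hb hjn) he
        exact this)
    intro t ht
    have h1 := hanti t ht
    simp only [hj0, hj'0, hG0, mul_zero, sub_zero, Real.exp_zero, one_mul] at h1
    have h2 : j' t - g t * j t ≤ 1 / Real.exp (G t) := (le_div_iff₀ (Real.exp_pos _)).2 h1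
    rwa [one_div, ← Real.exp_neg] at h2
  -- the second primitive W
  set W : ℝ → ℝ := fun x => ∫ s in (0:ℝ)..x, Real.exp (-2 * G s) with hWdef
  have hWintg : ContinuousOn (fun s => Real.exp (-2 * G s)) (Set.Icc 0 T) :=
    Real.continuous_exp.comp_continuousOn ((continuousOn_const).mul hGcont)
  have hWcont : ContinuousOn W (Set.Icc 0 T) := my_aux_prim_cont T hT _ hWintg
  have hWd : ∀ t ∈ Set.Ioo 0 T, HasDerivAt W (Real.exp (-2 * G t)) t :=
    my_aux_prim_deriv T _ hWintg
  have hW0 : W 0 = 0 := intervalIntegral.integral_same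
  -- Step 3: j e^{-G} - W is nonincreasing
  have hstep3 : j T * Real.exp (-G T) ≤ W T := by
    have hanti := my_aux_anti 0 T (fun t => j t * Real.exp (-G t) - W t)
      (fun t => (j' t * Real.exp (-G t) + j t * (Real.exp (-G t) * (-g t)))
        - Real.exp (-2 * G t))
      ((hjc.mul (Real.continuous_exp.comp_continuousOn hGcont.neg)).sub hWcont)
      (fun t ht => by
        have htI : t ∈ Set.Icc 0 T := ⟨ht.1.le, ht.2.le⟩
        have h1 : HasDerivAt (fun s => Real.exp (-G s)) (Real.exp (-G t) * (-g t)) t :=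
          ((hGd t ht).neg).exp
        exact ((hj t htI).mul h1).sub (hWd t ht))
      (fun t ht => by
        have htI : t ∈ Set.Icc 0 T := ⟨ht.1.le, ht.2.le⟩
        have hp := hpsi t htI
        have hE := (Real.exp_pos (-G t)).le
        have h1 : (j' t - g t * j t) * Real.exp (-G t) ≤ Real.exp (-G t) * Real.exp (-G t) :=
          by nlinarith
        have h2 : Real.exp (-G t) * Real.exp (-G t) = Real.exp (-2 * G t) := by
          rw [← Real.exp_add]; ring_nf
        show (j' t * Real.exp (-G t) + j t * (Real.exp (-G t) * (-g t)))
          - Real.exp (-2 * G t) ≤ 0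
        nlinarith)
    have h1 := hanti T hTI
    simp only [hj0, hG0, hW0, zero_mul, neg_zero, sub_zero] at h1
    linarith [h1]
  -- Step 4a: 1/g t ≤ 1/(k 0) + t, hence g t ≥ (1/(k 0) + t)⁻¹
  have hglow : ∀ t ∈ Set.Icc 0 T, ((k 0)⁻¹ + t)⁻¹ ≤ g t := by
    have hanti := my_aux_anti 0 T (fun t => (g t)⁻¹ - t) (fun t => -g' t / (g t) ^ 2 - 1)
      ((hg.inv₀ (fun t ht => (hgpos t ht).ne')).sub continuousOn_id)
      (fun t ht => by
        have htI : t ∈ Set.Icc 0 T := ⟨ht.1.le, ht.2.le⟩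
        exact ((hgd t htI).inv (hgpos t htI).ne').sub (hasDerivAt_id t))
      (fun t ht => by
        have htI : t ∈ Set.Icc 0 T := ⟨ht.1.le, ht.2.le⟩
        have hb := hbar t htI
        have hg2 : 0 < (g t) ^ 2 := pow_pos (hgpos t htI) 2
        have hk2 : 0 < (k t) ^ 2 := pow_pos (hkpos t htI) 2
        have h1 : -g' t < (g t) ^ 2 := by linarith
        have h2 : -g' t / (g t) ^ 2 < 1 := (div_lt_one hg2).2 h1
        show -g' t / (g t) ^ 2 - 1 ≤ 0
        linarith)
    intro t ht
    have h1 := hanti t ht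
    have h2 : (g t)⁻¹ ≤ (g 0)⁻¹ + t := by linarith
    have h3 : (g 0)⁻¹ ≤ (k 0)⁻¹ := inv_anti₀ hκ (hkg 0 h0I).le
    have h4 : (g t)⁻¹ ≤ (k 0)⁻¹ + t := by linarith
    have h5 : 0 < (g t)⁻¹ := inv_pos.2 (hgpos t ht)
    calc ((k 0)⁻¹ + t)⁻¹ ≤ ((g t)⁻¹)⁻¹ := inv_anti₀ h5 h4
    _ = g t := inv_inv _
  have hpos1 : ∀ t ∈ Set.Icc 0 T, (0:ℝ) < 1 + k 0 * t := by
    intro t ht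
    have := ht.1
    nlinarith
  have hlin : ∀ t : ℝ, HasDerivAt (fun s => 1 + k 0 * s) (k 0) t := by
    intro t
    simpa using ((hasDerivAt_id t).const_mul (k 0)).const_add 1
  -- Step 4b: G t ≥ log (1 + k 0 * t)
  have hexp2 : ∀ t ∈ Set.Icc 0 T, Real.exp (-2 * G t) ≤ ((1 + k 0 * t) ^ 2)⁻¹ := by
    have hmono := my_aux_mono 0 T (fun t => G t - Real.log (1 + k 0 * t))
      (fun t => g t - k 0 / (1 + k 0 * t))
      (hGcont.sub (fun t ht =>
        (((hlin t).log (hpos1 t ht).ne').continuousAt).continuousWithinAt))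
      (fun t ht => by
        have htI : t ∈ Set.Icc 0 T := ⟨ht.1.le, ht.2.le⟩
        exact (hGd t ht).sub ((hlin t).log (hpos1 t htI).ne'))
      (fun t ht => by
        have htI : t ∈ Set.Icc 0 T := ⟨ht.1.le, ht.2.le⟩
        have h1 : k 0 / (1 + k 0 * t) = ((k 0)⁻¹ + t)⁻¹ := by
          rw [show (k 0)⁻¹ + t = (1 + k 0 * t) / k 0 by field_simp, inv_div]
        show (0:ℝ) ≤ g t - k 0 / (1 + k 0 * t)
        have h2 := hglow t htI
        rw [h1]
        linarith)
    intro t ht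
    have h1 := hmono t ht
    simp only [hG0, mul_zero, add_zero, Real.log_one, sub_zero] at h1
    have h2 : Real.log (1 + k 0 * t) ≤ G t := by linarith
    have h3 : Real.exp (-2 * G t) ≤ Real.exp (-2 * Real.log (1 + k 0 * t)) :=
      Real.exp_le_exp.2 (by linarith)
    have h4 : Real.exp (-2 * Real.log (1 + k 0 * t)) = ((1 + k 0 * t) ^ 2)⁻¹ := by
      rw [show (-2:ℝ) * Real.log (1 + k 0 * t) = -Real.log ((1 + k 0 * t) ^ 2) by
          rw [Real.log_pow]; push_cast; ring,
        Real.exp_neg, Real.exp_log (pow_pos (hpos1 t ht) 2)]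
    rw [h4] at h3
    exact h3
  -- Step 4c: W T ≤ (k 0)⁻¹
  have hWT : W T ≤ (k 0)⁻¹ := by
    have hanti := my_aux_anti 0 T (fun t => W t + (k 0)⁻¹ * (1 + k 0 * t)⁻¹)
      (fun t => Real.exp (-2 * G t) + (k 0)⁻¹ * (-(k 0) / (1 + k 0 * t) ^ 2))
      (hWcont.add (continuousOn_const.mul
        ((continuous_const.add (continuous_const.mul continuous_id)).continuousOn.inv₀
          (fun t ht => (hpos1 t ht).ne'))))
      (fun t ht => by
        have htI : t ∈ Set.Icc 0 T := ⟨ht.1.le, ht.2.le⟩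
        exact (hWd t ht).add (((hlin t).inv (hpos1 t htI).ne').const_mul ((k 0)⁻¹)))
      (fun t ht => by
        have htI : t ∈ Set.Icc 0 T := ⟨ht.1.le, ht.2.le⟩
        have h1 : (k 0)⁻¹ * (-(k 0) / (1 + k 0 * t) ^ 2) = -((1 + k 0 * t) ^ 2)⁻¹ := by
          field_simp
        have h2 := hexp2 t htI
        show Real.exp (-2 * G t) + (k 0)⁻¹ * (-(k 0) / (1 + k 0 * t) ^ 2) ≤ 0
        rw [h1]
        linarith)
    have h1 := hanti T hTI
    simp only [hW0, mul_zero, add_zero, inv_one, mul_one, zero_add] at h1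
    have h2 : 0 ≤ (k 0)⁻¹ * (1 + k 0 * T)⁻¹ :=
      mul_nonneg (inv_nonneg.2 hκ.le) (inv_nonneg.2 (hpos1 T hTI).le)
    linarith
  -- conclusion
  have hfinal : j T * Real.exp (-G T) ≤ (k 0)⁻¹ := hstep3.trans hWT
  have h1 := mul_le_mul_of_nonneg_right hfinal (Real.exp_pos (G T)).le
  rw [mul_assoc, ← Real.exp_add, neg_add_cancel, Real.exp_zero, mul_one] at h1
  rw [one_div]
  exact h1
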